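/- For 0 ≤ x ≤ y one has x^x (1+y)^{1+y} ≥ y^y (1+x)^{1+x}, with the convention 0^0 = 1. Equivalently, the function x ↦ ((1+x)/x)^x (1+x) is monotone nondecreasing on (0,∞). -/

import Mathlib

open Real Set

private noncomputable def Faux : ℝ → ℝ := fun t => (1 + t) * Real.log (1 + t) - t * Real.log t

private lemma Faux_mono : MonotoneOn Faux (Set.Ici (0 : ℝ)) := by
  have hcont : ContinuousOn Faux (Set.Ici (0 : ℝ)) := by
    apply ContinuousOn.sub
    · exact ((Real.continuous_mul_log.comp (continuous_const.add continuous_id)).continuousOn)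
    · exact Real.continuous_mul_log.continuousOn
  have := StrictMonoOn.monotoneOn <| strictMonoOn_of_deriv_pos (convex_Ici (0:ℝ)) hcont ?_
  · exact this
  · intro x hx
    rw [interior_Ici] at hx
    have hx0 : (0:ℝ) < x := hx
    have h1 : HasDerivAt (fun t : ℝ => (1 + t) * Real.log (1 + t))
        ((Real.log (1 + x) + 1) * 1) x := by
      have := (Real.hasDerivAt_mul_log (x := 1 + x) (by linarith)).comp x
        ((hasDerivAt_id x).const_add 1)
      exact this
    have h2 : HasDerivAt (fun t : ℝ => t * Real.log t) (Real.log x + 1) x :=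
      Real.hasDerivAt_mul_log (ne_of_gt hx0)
    have hF : HasDerivAt Faux ((Real.log (1 + x) + 1) * 1 - (Real.log x + 1)) x := h1.sub h2
    rw [hF.deriv]
    have : Real.log x < Real.log (1 + x) := Real.log_lt_log hx0 (by linarith)
    linarith

private lemma rpow_eq_exp_aux {x : ℝ} (hx : 0 ≤ x) : x ^ x = Real.exp (x * Real.log x) := by
  rcases eq_or_lt_of_le hx with h | h
  · simp [← h, Real.rpow_zero]
  · rw [Real.rpow_def_of_pos h, mul_comm]

/-- For `0 ≤ x ≤ y` one has `x^x (1+y)^{1+y} ≥ y^y (1+x)^{1+x}` (real powers, with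
`0^0 = 1` as in `Real.rpow`); equivalently `x ↦ ((1+x)/x)^x (1+x)` is monotone
nondecreasing on `(0,∞)`. -/
theorem stmt_1 :
    (∀ x y : ℝ, 0 ≤ x → x ≤ y →
      y ^ y * (1 + x) ^ (1 + x) ≤ x ^ x * (1 + y) ^ (1 + y)) ∧
    MonotoneOn (fun x : ℝ => ((1 + x) / x) ^ x * (1 + x)) (Set.Ioi (0 : ℝ)) := by
  constructor
  · intro x y hx hxy
    have hy : (0:ℝ) ≤ y := le_trans hx hxy
    have hF := Faux_mono (Set.mem_Ici.2 hx) (Set.mem_Ici.2 hy) hxy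
    unfold Faux at hF
    rw [rpow_eq_exp_aux hx, rpow_eq_exp_aux hy,
      rpow_eq_exp_aux (show (0:ℝ) ≤ 1 + x by linarith),
      rpow_eq_exp_aux (show (0:ℝ) ≤ 1 + y by linarith),
      ← Real.exp_add, ← Real.exp_add, Real.exp_le_exp]
    linarith
  · intro x hx y hy hxy
    simp only [Set.mem_Ioi] at hx hy
    have key : ∀ z : ℝ, 0 < z → ((1 + z) / z) ^ z * (1 + z) = Real.exp (Faux z) := by
      intro z hz
      have h1z : (0:ℝ) < 1 + z := by linarith
      have h : ((1 + z) / z) ^ z * (1 + z)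
          = Real.exp (z * (Real.log (1 + z) - Real.log z)) * Real.exp (Real.log (1 + z)) := by
        rw [Real.rpow_def_of_pos (by positivity), Real.log_div (by linarith) (ne_of_gt hz),
          Real.exp_log h1z, mul_comm (Real.log (1 + z) - Real.log z) z]
      rw [h, ← Real.exp_add]
      unfold Faux
      congr 1
      ring
    dsimp only
    rw [key x hx, key y hy, Real.exp_le_exp]
    exact Faux_mono (le_of_lt hx) (le_of_lt hy) hxy
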